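/- There exists a constant C > 0, depending only on h, such that the following holds. Let l ∈ B and u, v ∈ L², and let Φ_u, Φ_v : [0,1] → L² be continuous functions satisfying the Marcus integral equations Φ_u(t) = u + l ∫₀ᵗ ḡ(Φ_u(s)) ds and Φ_v(t) = v + l ∫₀ᵗ ḡ(Φ_v(s)) ds for all t ∈ [0,1]. Define H(l,u) := Φ_u(1) − u − l ḡ(u) and H(l,v) := Φ_v(1) − v − l ḡ(v). Then ‖H(l,u) − H(l,v)‖_{L²} ≤ C ‖u − v‖_{L²}. -/

import Mathlib

open MeasureTheory
open scoped RealInnerProductSpace ENNReal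

/-- The cross product on `ℝ³ = EuclideanSpace ℝ (Fin 3)`. -/
noncomputable def cross3 (a b : EuclideanSpace ℝ (Fin 3)) : EuclideanSpace ℝ (Fin 3) :=
  WithLp.toLp 2 ![a 1 * b 2 - a 2 * b 1, a 2 * b 0 - a 0 * b 2, a 0 * b 1 - a 1 * b 0]

lemma cross3_sub_left (a b c : EuclideanSpace ℝ (Fin 3)) :
    cross3 (a - b) c = cross3 a c - cross3 b c := by
  ext i
  fin_cases i <;>
    simp [cross3, PiLp.sub_apply] <;> ring

lemma norm_cross3_le (a b : EuclideanSpace ℝ (Fin 3)) : ‖cross3 a b‖ ≤ ‖a‖ * ‖b‖ := by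
  rw [EuclideanSpace.norm_eq, EuclideanSpace.norm_eq, EuclideanSpace.norm_eq,
    ← Real.sqrt_mul (by positivity)]
  apply Real.sqrt_le_sqrt
  simp only [Fin.sum_univ_three, Real.norm_eq_abs, sq_abs, cross3, PiLp.toLp_apply]
  simp only [Matrix.cons_val_zero, Matrix.cons_val_one, Matrix.head_cons,
    Matrix.cons_val_two, Matrix.tail_cons]
  nlinarith [sq_nonneg (a 0 * b 0 + a 1 * b 1 + a 2 * b 2)]


/-- Lipschitz continuity of the Marcus correction
`H(l,u) = Φ_u(1) − u − l ḡ(u)`, uniformly in `l ∈ B`. -/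
theorem marcus_H_lipschitz
    {𝒪 : Type*} [MeasurableSpace 𝒪] (μ : Measure 𝒪) [IsFiniteMeasure μ]
    (h : 𝒪 → EuclideanSpace ℝ (Fin 3)) (hmeas : Measurable h) (hbdd : MemLp h ⊤ μ)
    (gbar : Lp (EuclideanSpace ℝ (Fin 3)) 2 μ → Lp (EuclideanSpace ℝ (Fin 3)) 2 μ)
    (hgbar : ∀ v, ∀ᵐ x ∂μ, gbar v x = cross3 (v x) (h x) + h x) :
    ∃ C : ℝ, 0 < C ∧
      ∀ (l : ℝ), 0 < |l| → |l| < 1 →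
      ∀ (u v : Lp (EuclideanSpace ℝ (Fin 3)) 2 μ)
        (Φu Φv : ℝ → Lp (EuclideanSpace ℝ (Fin 3)) 2 μ),
        ContinuousOn Φu (Set.Icc 0 1) → ContinuousOn Φv (Set.Icc 0 1) →
        (∀ t ∈ Set.Icc (0:ℝ) 1, Φu t = u + l • ∫ s in (0:ℝ)..t, gbar (Φu s)) →
        (∀ t ∈ Set.Icc (0:ℝ) 1, Φv t = v + l • ∫ s in (0:ℝ)..t, gbar (Φv s)) →
        ‖(Φu 1 - u - l • gbar u) - (Φv 1 - v - l • gbar v)‖ ≤ C * ‖u - v‖ := by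
  have hT : eLpNorm h ⊤ μ ≠ ⊤ := hbdd.2.ne
  set L : ℝ := (eLpNorm h ⊤ μ).toReal with hLdef
  have hL0 : 0 ≤ L := ENNReal.toReal_nonneg
  -- a.e. bound on h
  have haeh : ∀ᵐ x ∂μ, ‖h x‖ ≤ L := by
    have h1 : ∀ᵐ x ∂μ, (‖h x‖₊ : ℝ≥0∞) ≤ eLpNormEssSup h μ := ae_le_eLpNormEssSup
    filter_upwards [h1] with x hx
    have : (‖h x‖₊ : ℝ≥0∞).toReal ≤ (eLpNorm h ⊤ μ).toReal := by
      apply ENNReal.toReal_mono hT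
      rwa [eLpNorm_exponent_top]
    simpa [hLdef] using this
  -- Lipschitz estimate for gbar
  have hlip : ∀ a b : Lp (EuclideanSpace ℝ (Fin 3)) 2 μ, ‖gbar a - gbar b‖ ≤ L * ‖a - b‖ := by
    intro a b
    have hmono : ∀ᵐ x ∂μ, ‖(gbar a - gbar b : Lp (EuclideanSpace ℝ (Fin 3)) 2 μ) x‖ ≤
        ‖(L • ((a - b : Lp (EuclideanSpace ℝ (Fin 3)) 2 μ) : 𝒪 → EuclideanSpace ℝ (Fin 3))) x‖ := by
      filter_upwards [hgbar a, hgbar b, haeh, Lp.coeFn_sub (gbar a) (gbar b),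
        Lp.coeFn_sub a b] with x ha hb hh hsub hsub2
      rw [hsub]
      simp only [Pi.sub_apply]
      rw [ha, hb]
      have : cross3 (a x) (h x) + h x - (cross3 (b x) (h x) + h x)
          = cross3 (a x - b x) (h x) := by rw [cross3_sub_left]; abel
      rw [this]
      calc ‖cross3 (a x - b x) (h x)‖ ≤ ‖a x - b x‖ * ‖h x‖ := norm_cross3_le _ _
        _ ≤ ‖a x - b x‖ * L := by
            exact mul_le_mul_of_nonneg_left hh (norm_nonneg _)
        _ = ‖(L • ((a - b : Lp (EuclideanSpace ℝ (Fin 3)) 2 μ) : 𝒪 → EuclideanSpace ℝ (Fin 3))) x‖ := by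
            rw [Pi.smul_apply, norm_smul, Real.norm_eq_abs, abs_of_nonneg hL0, hsub2,
              Pi.sub_apply, mul_comm]
    have h2 : eLpNorm ((gbar a - gbar b : Lp (EuclideanSpace ℝ (Fin 3)) 2 μ) : 𝒪 → EuclideanSpace ℝ (Fin 3)) 2 μ ≤
        eLpNorm (L • ((a - b : Lp (EuclideanSpace ℝ (Fin 3)) 2 μ) : 𝒪 → EuclideanSpace ℝ (Fin 3))) 2 μ := eLpNorm_mono_ae hmono
    rw [eLpNorm_const_smul] at h2
    rw [Lp.norm_def, Lp.norm_def]
    calc (eLpNorm ((gbar a - gbar b : Lp (EuclideanSpace ℝ (Fin 3)) 2 μ) : 𝒪 → EuclideanSpace ℝ (Fin 3)) 2 μ).toReal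
        ≤ ((‖L‖₊ : ℝ≥0∞) * eLpNorm ((a - b : Lp (EuclideanSpace ℝ (Fin 3)) 2 μ) : 𝒪 → EuclideanSpace ℝ (Fin 3)) 2 μ).toReal := by
          apply ENNReal.toReal_mono _ h2
          exact ENNReal.mul_ne_top ENNReal.coe_ne_top (Lp.eLpNorm_ne_top _)
      _ = L * (eLpNorm ((a - b : Lp (EuclideanSpace ℝ (Fin 3)) 2 μ) : 𝒪 → EuclideanSpace ℝ (Fin 3)) 2 μ).toReal := by
          rw [ENNReal.toReal_mul, ENNReal.coe_toReal, coe_nnnorm, Real.norm_eq_abs,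
            abs_of_nonneg hL0]
  have gcont : Continuous gbar := by
    have : LipschitzWith ⟨L, hL0⟩ gbar := by
      apply LipschitzWith.of_dist_le_mul
      intro a b
      rw [dist_eq_norm, dist_eq_norm]
      exact hlip a b
    exact this.continuous
  refine ⟨Real.exp L + 1 + L, by positivity, ?_⟩
  intro l hl0 hl1 u v Φu Φv hΦu hΦv hu hv
  -- projection onto [0,1]
  set p : ℝ → ℝ := fun t => max 0 (min 1 t) with hpdef
  have pcont : Continuous p := continuous_const.max (continuous_const.min continuous_id)
  have pmem : ∀ t, p t ∈ Set.Icc (0:ℝ) 1 :=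
    fun t => ⟨le_max_left _ _, max_le (by norm_num) (min_le_left _ _)⟩
  have peq : ∀ t ∈ Set.Icc (0:ℝ) 1, p t = t := by
    intro t ht
    simp [hpdef, min_eq_right ht.2, max_eq_right ht.1]
  set Ψu : ℝ → Lp (EuclideanSpace ℝ (Fin 3)) 2 μ := fun t => Φu (p t) with hΨu
  set Ψv : ℝ → Lp (EuclideanSpace ℝ (Fin 3)) 2 μ := fun t => Φv (p t) with hΨv
  have Ψucont : Continuous Ψu := hΦu.comp_continuous pcont pmem
  have Ψvcont : Continuous Ψv := hΦv.comp_continuous pcont pmem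
  set Gu : ℝ → Lp (EuclideanSpace ℝ (Fin 3)) 2 μ := fun t => gbar (Ψu t) with hGu
  set Gv : ℝ → Lp (EuclideanSpace ℝ (Fin 3)) 2 μ := fun t => gbar (Ψv t) with hGv
  have Gucont : Continuous Gu := gcont.comp Ψucont
  have Gvcont : Continuous Gv := gcont.comp Ψvcont
  set f : ℝ → Lp (EuclideanSpace ℝ (Fin 3)) 2 μ :=
    fun t => (u - v) + l • ((∫ s in (0:ℝ)..t, Gu s) - ∫ s in (0:ℝ)..t, Gv s) with hfdef
  -- f agrees with Φu - Φv on [0,1]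
  have hfeq : ∀ t ∈ Set.Icc (0:ℝ) 1, f t = Φu t - Φv t := by
    intro t ht
    have hIu : (∫ s in (0:ℝ)..t, Gu s) = ∫ s in (0:ℝ)..t, gbar (Φu s) := by
      apply intervalIntegral.integral_congr
      intro s hs
      rw [Set.uIcc_of_le ht.1] at hs
      have hs' : s ∈ Set.Icc (0:ℝ) 1 := ⟨hs.1, hs.2.trans ht.2⟩
      simp [hGu, hΨu, peq s hs']
    have hIv : (∫ s in (0:ℝ)..t, Gv s) = ∫ s in (0:ℝ)..t, gbar (Φv s) := by
      apply intervalIntegral.integral_congr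
      intro s hs
      rw [Set.uIcc_of_le ht.1] at hs
      have hs' : s ∈ Set.Icc (0:ℝ) 1 := ⟨hs.1, hs.2.trans ht.2⟩
      simp [hGv, hΨv, peq s hs']
    rw [hfdef]
    simp only [hIu, hIv, hu t ht, hv t ht, smul_sub]
    abel
  have hderiv : ∀ t : ℝ, HasDerivAt f (l • (Gu t - Gv t)) t := by
    intro t
    have h1 : HasDerivAt (fun τ => ∫ s in (0:ℝ)..τ, Gu s) (Gu t) t :=
      (Gucont.integral_hasStrictDerivAt 0 t).hasDerivAt
    have h2 : HasDerivAt (fun τ => ∫ s in (0:ℝ)..τ, Gv s) (Gv t) t :=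
      (Gvcont.integral_hasStrictDerivAt 0 t).hasDerivAt
    have := ((h1.sub h2).const_smul l).const_add (u - v)
    exact this
  have gron := norm_le_gronwallBound_of_norm_deriv_right_le
    (a := 0) (b := 1) (f := f) (f' := fun t => l • (Gu t - Gv t))
    (δ := ‖u - v‖) (K := L) (ε := 0)
    (Continuous.continuousOn (by
      apply continuous_const.add
      exact (((intervalIntegral.continuous_primitive
        (fun a b => Gucont.intervalIntegrable a b) 0).sub
        (intervalIntegral.continuous_primitive
        (fun a b => Gvcont.intervalIntegrable a b) 0)).const_smul l)))
    (fun t _ => (hderiv t).hasDerivWithinAt)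
    (by simp [hfdef])
    (by
      intro t ht
      have ht' : t ∈ Set.Icc (0:ℝ) 1 := ⟨ht.1, le_of_lt ht.2⟩
      have hGG : Gu t - Gv t = gbar (Φu t) - gbar (Φv t) := by
        simp [hGu, hGv, hΨu, hΨv, peq t ht']
      rw [norm_smul, hGG, Real.norm_eq_abs]
      have h1 : ‖gbar (Φu t) - gbar (Φv t)‖ ≤ L * ‖Φu t - Φv t‖ := hlip _ _
      have h2 : Φu t - Φv t = f t := (hfeq t ht').symm
      rw [h2] at h1
      have : |l| * ‖gbar (Φu t) - gbar (Φv t)‖ ≤ 1 * (L * ‖f t‖) := by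
        apply mul_le_mul (le_of_lt hl1) h1 (norm_nonneg _) (by norm_num)
      linarith)
  have hf1 : ‖f 1‖ ≤ ‖u - v‖ * Real.exp L := by
    have := gron 1 ⟨by norm_num, le_refl 1⟩
    rwa [gronwallBound_ε0, sub_zero, mul_one] at this
  -- final assembly
  have key : (Φu 1 - u - l • gbar u) - (Φv 1 - v - l • gbar v)
      = f 1 - (u - v) - l • (gbar u - gbar v) := by
    rw [hfeq 1 ⟨by norm_num, le_refl 1⟩, smul_sub]
    abel
  rw [key]
  have t1 : ‖f 1 - (u - v) - l • (gbar u - gbar v)‖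
      ≤ ‖f 1‖ + ‖u - v‖ + ‖l • (gbar u - gbar v)‖ := by
    calc ‖f 1 - (u - v) - l • (gbar u - gbar v)‖
        ≤ ‖f 1 - (u - v)‖ + ‖l • (gbar u - gbar v)‖ := norm_sub_le _ _
      _ ≤ ‖f 1‖ + ‖u - v‖ + ‖l • (gbar u - gbar v)‖ := by
          have := norm_sub_le (f 1) (u - v); linarith
  have t2 : ‖l • (gbar u - gbar v)‖ ≤ L * ‖u - v‖ := by
    rw [norm_smul, Real.norm_eq_abs]
    calc |l| * ‖gbar u - gbar v‖ ≤ 1 * (L * ‖u - v‖) :=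
          mul_le_mul (le_of_lt hl1) (hlip u v) (norm_nonneg _) (by norm_num)
      _ = L * ‖u - v‖ := one_mul _
  calc ‖f 1 - (u - v) - l • (gbar u - gbar v)‖
      ≤ ‖f 1‖ + ‖u - v‖ + ‖l • (gbar u - gbar v)‖ := t1
    _ ≤ ‖u - v‖ * Real.exp L + ‖u - v‖ + L * ‖u - v‖ := by linarith
    _ = (Real.exp L + 1 + L) * ‖u - v‖ := by ring
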